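/- arXiv:2508.03662 — 10 statements merged into one kernel-verified Lean document; each statement's English description precedes it below -/
import Mathlib

section
/- Let Γ be a finite simple graph that is transvection-free and contains no square (no induced 4-cycle, i.e., no cycle v₁v₂v₃v₄ with v₁ not adjacent to v₃ and v₂ not adjacent to v₄). Then every connected component of Γ is strongly reduced: no connected component Γ₀ contains a proper collapsible full subgraph on at least two vertices. -/
namespace SimpleGraph

variable {V : Type*}

/-- The star of a vertex: the vertex together with its link (set of neighbors). -/
def vstar (G : SimpleGraph V) (v : V) : Set V := insert v (G.neighborSet v)

/-- A graph is transvection-free if there are no distinct vertices `v, v'` with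
`lk(v) ⊆ st(v')`. -/
def TransvectionFree (G : SimpleGraph V) : Prop :=
  ∀ v v' : V, v ≠ v' → ¬ G.neighborSet v ⊆ G.vstar v'

/-- A graph contains a square if it has a cycle `v₁ v₂ v₃ v₄` with `v₁` not adjacent to `v₃`
and `v₂` not adjacent to `v₄`. -/
def HasSquare (G : SimpleGraph V) : Prop :=
  ∃ v₁ v₂ v₃ v₄ : V, v₁ ≠ v₃ ∧ v₂ ≠ v₄ ∧ G.Adj v₁ v₂ ∧ G.Adj v₂ v₃ ∧ G.Adj v₃ v₄ ∧
    G.Adj v₄ v₁ ∧ ¬ G.Adj v₁ v₃ ∧ ¬ G.Adj v₂ v₄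

/-- `Λ^⊥`: the set of vertices outside `Λ` adjacent to every vertex of `Λ`. -/
def perp (G : SimpleGraph V) (Λ : Set V) : Set V :=
  {w | w ∉ Λ ∧ ∀ u ∈ Λ, G.Adj w u}

/-- A full subgraph `Λ` is collapsible if `st(v) ∩ (Γ \ Λ) = Λ^⊥` for every `v ∈ Λ`. -/
def IsCollapsible (G : SimpleGraph V) (Λ : Set V) : Prop :=
  ∀ v ∈ Λ, {w | w ∉ Λ ∧ G.Adj v w} = G.perp Λ

/-- `Λ^⊥` computed inside the full subgraph spanned by `S`. -/
def perpIn (G : SimpleGraph V) (S Λ : Set V) : Set V :=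
  {w ∈ S | w ∉ Λ ∧ ∀ u ∈ Λ, G.Adj w u}

/-- `Λ` is a collapsible full subgraph of the full subgraph spanned by `S`. -/
def IsCollapsibleIn (G : SimpleGraph V) (S Λ : Set V) : Prop :=
  Λ ⊆ S ∧ ∀ v ∈ Λ, {w ∈ S | w ∉ Λ ∧ G.Adj v w} = G.perpIn S Λ

/-- The full subgraph spanned by `S` is strongly reduced: it has no proper collapsible
full subgraph on at least two vertices. -/
def StronglyReducedOn (G : SimpleGraph V) (S : Set V) : Prop :=
  ∀ Λ : Set V, G.IsCollapsibleIn S Λ → 2 ≤ Λ.ncard → Λ = S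

/-- A graph is strongly reduced: no proper collapsible full subgraph on ≥ 2 vertices. -/
def StronglyReduced (G : SimpleGraph V) : Prop :=
  ∀ Λ : Set V, G.IsCollapsible Λ → 2 ≤ Λ.ncard → Λ = Set.univ

/-- A graph is clique-reduced if it has no collapsible complete full subgraph on at least
two vertices. -/
def CliqueReduced (G : SimpleGraph V) : Prop :=
  ∀ Λ : Set V, G.IsCollapsible Λ → Λ.Pairwise G.Adj → Λ.ncard ≤ 1

/-- The domination preorder: `v ≤ v'` iff `lk(v) ⊆ st(v')`. -/
def dle (G : SimpleGraph V) (v v' : V) : Prop := G.neighborSet v ⊆ G.vstar v'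

/-- The equivalence relation induced by the domination preorder. -/
def sim (G : SimpleGraph V) (v v' : V) : Prop := G.dle v v' ∧ G.dle v' v

/-- The `∼`-equivalence class of a vertex. -/
def simClass (G : SimpleGraph V) (v : V) : Set V := {v' | G.sim v v'}

/-- For a set `S` of vertices, the set of vertices adjacent to every vertex of `S`. -/
def perpSet (G : SimpleGraph V) (S : Set V) : Set V := {w | ∀ u ∈ S, G.Adj w u}

/-- A set of vertices spans a join full subgraph: it can be partitioned into two nonempty
sets with every vertex of the first adjacent to every vertex of the second. -/
def IsJoinSet (G : SimpleGraph V) (S : Set V) : Prop :=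
  ∃ S₁ S₂ : Set V, S₁.Nonempty ∧ S₂.Nonempty ∧ Disjoint S₁ S₂ ∧ S₁ ∪ S₂ = S ∧
    ∀ a ∈ S₁, ∀ b ∈ S₂, G.Adj a b

/-- A maximal join full subgraph. -/
def IsMaxJoinSet (G : SimpleGraph V) (S : Set V) : Prop :=
  G.IsJoinSet S ∧ ∀ T : Set V, G.IsJoinSet T → S ⊆ T → T = S

/-- The maximal clique factor of the full subgraph spanned by `S`: the vertices of `S`
adjacent to all other vertices of `S`. -/
def cliqueFactorIn (G : SimpleGraph V) (S : Set V) : Set V :=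
  {v ∈ S | ∀ w ∈ S, w ≠ v → G.Adj v w}

/-- The full subgraph spanned by `S` is irreducible: it is not a join. -/
def IrreducibleSet (G : SimpleGraph V) (S : Set V) : Prop := ¬ G.IsJoinSet S

end SimpleGraph

private lemma cross_edge {V : Type*} {G : SimpleGraph V} {Λ : Set V} {v s : V}
    (p : G.Walk v s) (hv : v ∈ Λ) (hs : s ∉ Λ) : ∃ a ∈ Λ, ∃ b, b ∉ Λ ∧ G.Adj a b := by
  induction p with
  | nil => exact absurd hv hs
  | @cons u w x h p ih =>
    by_cases hw : w ∈ Λ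
    · exact ih hw hs
    · exact ⟨u, hv, w, hw, h⟩

private lemma mem_supp_of_adj {V : Type*} {G : SimpleGraph V} {c : G.ConnectedComponent}
    {a b : V} (ha : a ∈ c.supp) (h : G.Adj a b) : b ∈ c.supp := by
  rw [SimpleGraph.ConnectedComponent.mem_supp_iff] at *
  rw [← ha]
  exact SimpleGraph.ConnectedComponent.sound h.symm.reachable

open SimpleGraph in
theorem stmt_1 {V : Type*} [Fintype V] (G : SimpleGraph V)
    (htf : G.TransvectionFree) (hsq : ¬ G.HasSquare) :
    ∀ c : G.ConnectedComponent, G.StronglyReducedOn c.supp := by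
  intro c Λ hColl hcard
  obtain ⟨hΛS, hcol⟩ := hColl
  by_contra hne
  -- key: any neighbor of a vertex of Λ which is outside Λ lies in perpIn, i.e. is
  -- adjacent to all of Λ
  have key : ∀ a ∈ Λ, ∀ b, b ∉ Λ → G.Adj a b → ∀ u ∈ Λ, G.Adj b u := by
    intro a ha b hbΛ hab u hu
    have hbS : b ∈ c.supp := mem_supp_of_adj (hΛS ha) hab
    have : b ∈ G.perpIn c.supp Λ := by
      rw [← hcol a ha]; exact ⟨hbS, hbΛ, hab⟩
    exact this.2.2 u hu
  -- two distinct vertices of Λ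
  obtain ⟨a, ha, b, hb, hab⟩ := (Set.one_lt_ncard Λ.toFinite).mp hcard
  -- find a crossing edge: some w outside Λ adjacent to a vertex of Λ
  have hex : ∃ s ∈ c.supp, s ∉ Λ := by
    by_contra h
    push_neg at h
    exact hne (Set.Subset.antisymm hΛS h)
  obtain ⟨s, hsS, hsΛ⟩ := hex
  have hreach : G.Reachable a s := by
    have h1 := (SimpleGraph.ConnectedComponent.mem_supp_iff c a).mp (hΛS ha)
    have h2 := (SimpleGraph.ConnectedComponent.mem_supp_iff c s).mp hsS
    exact SimpleGraph.ConnectedComponent.exact (h1.trans h2.symm)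
  obtain ⟨p⟩ := hreach
  obtain ⟨a', ha', w, hwΛ, ha'w⟩ := cross_edge p ha hsΛ
  -- w is adjacent to all of Λ
  have hwperp : ∀ u ∈ Λ, G.Adj w u := key a' ha' w hwΛ ha'w
  -- transvection-freeness at (a, b): get u ∈ Λ adjacent to a but not in st(b)
  obtain ⟨u, hua, hub⟩ := Set.not_subset.mp (htf a b hab)
  have huΛ : u ∈ Λ := by
    by_contra huΛ
    exact hub (Or.inr ((key a ha u huΛ hua b hb).symm))
  have hune : u ≠ b := fun h => hub (Or.inl h)
  have hunadj : ¬ G.Adj u b := fun h => hub (Or.inr h.symm)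
  -- transvection-freeness at (a, w): get x adjacent to a but not in st(w)
  have haw : a ≠ w := fun h => hwΛ (h ▸ ha)
  obtain ⟨x, hxa, hxw⟩ := Set.not_subset.mp (htf a w haw)
  have hxΛ : x ∉ Λ := fun hxΛ => hxw (Or.inr (hwperp x hxΛ))
  have hxperp : ∀ u ∈ Λ, G.Adj x u := key a ha x hxΛ hxa
  have hxnw : x ≠ w := fun h => hxw (Or.inl h)
  have hxwadj : ¬ G.Adj x w := fun h => hxw (Or.inr h.symm)
  -- build the square u - w - b - x - u
  exact hsq ⟨u, w, b, x, hune, hxnw.symm,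
    (hwperp u huΛ).symm, hwperp b hb, (hxperp b hb).symm, hxperp u huΛ,
    hunadj, fun h => hxwadj h.symm⟩
end

section
/- Let Λ be a finite simple graph such that every connected component of Λ is strongly reduced. If Δ ⊆ Λ is a collapsible full subgraph with at least 2 vertices, then Δ is a union of connected components of Λ. -/
open SimpleGraph in
theorem stmt_2 {V : Type*} [Fintype V] (G : SimpleGraph V)
    (hcomp : ∀ c : G.ConnectedComponent, G.StronglyReducedOn c.supp)
    (Δ : Set V) (hcol : G.IsCollapsible Δ) (hcard : 2 ≤ Δ.ncard) :
    ∃ 𝒞 : Set G.ConnectedComponent, Δ = ⋃ c ∈ 𝒞, c.supp := by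
  by_cases hone : ∀ u ∈ Δ, ∀ v ∈ Δ, G.connectedComponentMk u = G.connectedComponentMk v
  · -- Δ lies in a single component
    have hne : Δ.Nonempty := Set.nonempty_of_ncard_ne_zero (by omega)
    obtain ⟨v, hv⟩ := hne
    set c := G.connectedComponentMk v with hc
    have hsub : Δ ⊆ c.supp := fun u hu => by
      rw [ConnectedComponent.mem_supp_iff]; exact hone u hu v hv
    have hin : G.IsCollapsibleIn c.supp Δ := by
      refine ⟨hsub, fun x hx => ?_⟩
      ext w
      simp only [Set.mem_setOf_eq, SimpleGraph.perpIn, Set.mem_sep_iff]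
      constructor
      · rintro ⟨hwc, hwΔ, hadj⟩
        have hw : w ∈ G.perp Δ := by rw [← hcol x hx]; exact ⟨hwΔ, hadj⟩
        exact ⟨hwc, hw.1, hw.2⟩
      · rintro ⟨hwc, hwΔ, hall⟩
        have hw : w ∈ {w | w ∉ Δ ∧ G.Adj x w} := by
          rw [hcol x hx]; exact ⟨hwΔ, hall⟩
        exact ⟨hwc, hw.1, hw.2⟩
    have heq := hcomp c Δ hin hcard
    exact ⟨{c}, by simp [heq]⟩
  · push_neg at hone
    obtain ⟨u, hu, v, hv, huv⟩ := hone
    have hperp : G.perp Δ = ∅ := by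
      ext w
      simp only [SimpleGraph.perp, Set.mem_setOf_eq, Set.mem_empty_iff_false, iff_false,
        not_and]
      intro _ hall
      exact huv (ConnectedComponent.sound ((hall u hu).reachable.symm.trans (hall v hv).reachable))
    have hclosed : ∀ x ∈ Δ, ∀ y, G.Adj x y → y ∈ Δ := by
      intro x hx y hadj
      by_contra hy
      have : y ∈ G.perp Δ := by rw [← hcol x hx]; exact ⟨hy, hadj⟩
      rw [hperp] at this
      exact this
    have key : ∀ (x y : V) (_ : G.Walk x y), x ∈ Δ → y ∈ Δ := by
      intro x y p
      induction p with
      | nil => exact id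
      | cons h p ih => intro hx; exact ih (hclosed _ hx _ h)
    refine ⟨{c | ∃ x ∈ Δ, x ∈ c.supp}, ?_⟩
    ext w
    simp only [Set.mem_iUnion, Set.mem_setOf_eq, ConnectedComponent.mem_supp_iff]
    constructor
    · intro hw
      exact ⟨G.connectedComponentMk w, ⟨w, hw, rfl⟩, rfl⟩
    · rintro ⟨c, ⟨x, hx, hxc⟩, hwc⟩
      have : G.Reachable x w := ConnectedComponent.exact (hxc.trans hwc.symm)
      exact key x w this.some hx
end

section
/- Let Γ, Λ be clique-reduced finite simple graphs. Suppose α maps each vertex of Γ to a nonempty set of vertices of Λ and β maps each vertex of Λ to a nonempty set of vertices of Γ, such that: (1) if distinct v, v' ∈ Γ are adjacent then α(v') ⊆ α(v)^⊥; (2) if distinct w, w' ∈ Λ are adjacent then β(w') ⊆ β(w)^⊥; (3) for all v ∈ Γ and w ∈ Λ, w ∈ α(v) if and only if v ∈ β(w). Then for every v ∈ Γ, the set α([v]) := ∪_{v'∼v} α(v') is a single ∼-equivalence class of vertices of Λ, and similarly for β; moreover the induced maps between the quotient graphs E(Γ) and E(Λ) are graph isomorphisms inverse to each other. -/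
namespace SimpleGraph

variable {V : Type*} {G : SimpleGraph V}

lemma crx_sim_symm {v v' : V} (h : G.sim v v') : G.sim v' v := ⟨h.2, h.1⟩

lemma crx_not_adj (hG : G.CliqueReduced) {v v' : V} (hs : G.sim v v')
    (ha : G.Adj v v') : False := by
  have hne : v ≠ v' := ha.ne
  have hiff : ∀ w, w ≠ v → w ≠ v' → (G.Adj v w ↔ G.Adj v' w) := by
    intro w hwv hwv'
    constructor
    · intro h
      rcases Set.mem_insert_iff.mp (hs.1 h) with rfl | h'
      · exact absurd rfl hwv'
      · exact h'
    · intro h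
      rcases Set.mem_insert_iff.mp (hs.2 h) with rfl | h'
      · exact absurd rfl hwv
      · exact h'
  have hcol : G.IsCollapsible {v, v'} := by
    intro a ha'
    ext w
    simp only [perp, Set.mem_setOf_eq, Set.mem_insert_iff, Set.mem_singleton_iff, not_or]
    constructor
    · rintro ⟨⟨hwv, hwv'⟩, haw⟩
      refine ⟨⟨hwv, hwv'⟩, ?_⟩
      have h1 : G.Adj v w ∧ G.Adj v' w := by
        rcases ha' with rfl | rfl
        · exact ⟨haw, (hiff w hwv hwv').mp haw⟩
        · exact ⟨(hiff w hwv hwv').mpr haw, haw⟩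
      rintro u (rfl | rfl)
      · exact h1.1.symm
      · exact h1.2.symm
    · rintro ⟨⟨hwv, hwv'⟩, hall⟩
      refine ⟨⟨hwv, hwv'⟩, ?_⟩
      rcases ha' with rfl | rfl
      · exact (hall a (Or.inl rfl)).symm
      · exact (hall a (Or.inr rfl)).symm
  have hpair : ({v, v'} : Set V).Pairwise G.Adj := by
    rw [Set.pairwise_pair]
    exact fun _ => ⟨ha, ha.symm⟩
  have := hG _ hcol hpair
  rw [Set.ncard_pair hne] at this
  omega

lemma crx_links (hG : G.CliqueReduced) {v v' : V} (hs : G.sim v v') (hne : v ≠ v') :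
    G.neighborSet v = G.neighborSet v' := by
  ext u
  constructor
  · intro hu
    rcases Set.mem_insert_iff.mp (hs.1 hu) with rfl | h'
    · exact absurd hu (fun h => crx_not_adj hG hs h)
    · exact h'
  · intro hu
    rcases Set.mem_insert_iff.mp (hs.2 hu) with rfl | h'
    · exact absurd hu (fun h => crx_not_adj hG hs h.symm)
    · exact h'

lemma crx_adj_congr (hG : G.CliqueReduced) {a b c : V} (hs : G.sim a b)
    (h : G.Adj a c) : G.Adj b c := by
  by_cases hab : a = b
  · exact hab ▸ h
  · have hl := crx_links hG hs hab
    have : c ∈ G.neighborSet b := hl ▸ (h : c ∈ G.neighborSet a)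
    exact this

lemma crx_sim_trans (hG : G.CliqueReduced) {a b c : V} (h1 : G.sim a b)
    (h2 : G.sim b c) : G.sim a c := by
  constructor
  · intro u hu
    exact Set.mem_insert_of_mem _ (crx_adj_congr hG h2 (crx_adj_congr hG h1 hu))
  · intro u hu
    exact Set.mem_insert_of_mem _
      (crx_adj_congr hG (crx_sim_symm h1) (crx_adj_congr hG (crx_sim_symm h2) hu))

lemma crx_simClass_eq (hG : G.CliqueReduced) {a b : V} (h : G.sim a b) :
    G.simClass a = G.simClass b :=
  Set.ext fun u => ⟨fun hu => crx_sim_trans hG (crx_sim_symm h) hu,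
    fun hu => crx_sim_trans hG h hu⟩

end SimpleGraph

open SimpleGraph in
theorem stmt_3 {V W : Type*} [Fintype V] [Fintype W]
    (G : SimpleGraph V) (H : SimpleGraph W)
    (hG : G.CliqueReduced) (hH : H.CliqueReduced)
    (α : V → Set W) (β : W → Set V)
    (hαne : ∀ v : V, (α v).Nonempty) (hβne : ∀ w : W, (β w).Nonempty)
    (h1 : ∀ v v' : V, v ≠ v' → G.Adj v v' → α v' ⊆ H.perpSet (α v))
    (h2 : ∀ w w' : W, w ≠ w' → H.Adj w w' → β w' ⊆ G.perpSet (β w))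
    (h3 : ∀ (v : V) (w : W), w ∈ α v ↔ v ∈ β w) :
    (∀ v : V, ∃ w : W, (⋃ v' ∈ G.simClass v, α v') = H.simClass w) ∧
    (∀ w : W, ∃ v : V, (⋃ w' ∈ H.simClass w, β w') = G.simClass v) ∧
    (∀ (v : V) (w : W), w ∈ (⋃ v' ∈ G.simClass v, α v') →
        (⋃ w' ∈ H.simClass w, β w') = G.simClass v) ∧
    (∀ (w : W) (v : V), v ∈ (⋃ w' ∈ H.simClass w, β w') →
        (⋃ v' ∈ G.simClass v, α v') = H.simClass w) ∧
    (∀ (v v' : V) (w w' : W), ¬ G.sim v v' →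
        w ∈ (⋃ u ∈ G.simClass v, α u) → w' ∈ (⋃ u ∈ G.simClass v', α u) →
        (G.Adj v v' ↔ H.Adj w w')) := by
  have hαβ : ∀ v w, w ∈ α v → v ∈ β w := fun v w h => (h3 v w).mp h
  have hβα : ∀ w v, v ∈ β w → w ∈ α v := fun w v h => (h3 v w).mpr h
  -- any two members of one fiber α v are dominated by each other
  have key1 : ∀ (v : V) (w w' : W), w ∈ α v → w' ∈ α v → H.dle w w' := by
    intro v w w' hw hw' u hu
    by_cases huw' : u = w'
    · exact Set.mem_insert_iff.mpr (Or.inl huw')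
    obtain ⟨x, hx⟩ := hβne u
    have hxv : G.Adj x v := ((h2 w u hu.ne hu) hx) v (hαβ v w hw)
    exact Set.mem_insert_of_mem _ (((h1 x v hxv.ne hxv) hw') u (hβα u x hx))
  have key1β : ∀ (w : W) (v v' : V), v ∈ β w → v' ∈ β w → G.dle v v' := by
    intro w v v' hv hv' u hu
    by_cases huv' : u = v'
    · exact Set.mem_insert_iff.mpr (Or.inl huv')
    obtain ⟨x, hx⟩ := hαne u
    have hxw : H.Adj x w := ((h1 v u hu.ne hu) hx) w (hβα w v hv)
    exact Set.mem_insert_of_mem _ (((h2 x w hxw.ne hxw) hv') u (hαβ u x hx))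
  -- members of sim-related fibers are never adjacent
  have noadj : ∀ (v v' : V) (w w' : W), G.sim v v' → w ∈ α v → w' ∈ α v' →
      H.Adj w w' → False := by
    intro v v' w w' hs hw hw' hadj
    have hv'v : G.Adj v' v := ((h2 w w' hadj.ne hadj) (hαβ v' w' hw')) v (hαβ v w hw)
    by_cases hvv' : v = v'
    · exact G.irrefl (hvv' ▸ hv'v)
    · exact crx_not_adj hG hs hv'v.symm
  have noadjβ : ∀ (w w' : W) (v v' : V), H.sim w w' → v ∈ β w → v' ∈ β w' →
      G.Adj v v' → False := by
    intro w w' v v' hs hv hv' hadj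
    have hw'w : H.Adj w' w := ((h1 v v' hadj.ne hadj) (hβα w' v' hv')) w (hβα w v hv)
    by_cases hww' : w = w'
    · exact H.irrefl (hww' ▸ hw'w)
    · exact crx_not_adj hH hs hw'w.symm
  -- members of sim-related fibers are sim
  have key2 : ∀ (v v' : V) (w w' : W), G.sim v v' → w ∈ α v → w' ∈ α v' →
      H.dle w w' := by
    intro v v' w w' hs hw hw' u hu
    by_cases huw' : u = w'
    · exact Set.mem_insert_iff.mpr (Or.inl huw')
    obtain ⟨x, hx⟩ := hβne u
    have hxv : G.Adj x v := ((h2 w u hu.ne hu) hx) v (hαβ v w hw)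
    rcases Set.mem_insert_iff.mp (hs.1 hxv.symm) with hxe | hxadj
    · -- x = v', hence u ∈ α v', so u ∼ w' and links of u, w' agree
      have huv' : u ∈ α v' := hxe ▸ hβα u x hx
      have hsim : H.sim u w' := ⟨key1 v' u w' huv' hw', key1 v' w' u hw' huv'⟩
      have hl := crx_links hH hsim huw'
      have hww' : H.Adj w' w := (Set.ext_iff.mp hl w).mp hu.symm
      exact (noadj v v' w w' hs hw hw' hww'.symm).elim
    · exact Set.mem_insert_of_mem _
        (((h1 x v' hxadj.symm.ne hxadj.symm) hw') u (hβα u x hx))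
  have key2β : ∀ (w w' : W) (v v' : V), H.sim w w' → v ∈ β w → v' ∈ β w' →
      G.dle v v' := by
    intro w w' v v' hs hv hv' u hu
    by_cases huv' : u = v'
    · exact Set.mem_insert_iff.mpr (Or.inl huv')
    obtain ⟨x, hx⟩ := hαne u
    have hxw : H.Adj x w := ((h1 v u hu.ne hu) hx) w (hβα w v hv)
    rcases Set.mem_insert_iff.mp (hs.1 hxw.symm) with hxe | hxadj
    · have huw' : u ∈ β w' := hxe ▸ hαβ u x hx
      have hsim : G.sim u v' := ⟨key1β w' u v' huw' hv', key1β w' v' u hv' huw'⟩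
      have hl := crx_links hG hsim huv'
      have hvv' : G.Adj v' v := (Set.ext_iff.mp hl v).mp hu.symm
      exact (noadjβ w w' v v' hs hv hv' hvv'.symm).elim
    · exact Set.mem_insert_of_mem _
        (((h2 x w' hxadj.symm.ne hxadj.symm) hv') u (hαβ u x hx))
  have key2sim : ∀ (v v' : V) (w w' : W), G.sim v v' → w ∈ α v → w' ∈ α v' →
      H.sim w w' := fun v v' w w' hs hw hw' =>
    ⟨key2 v v' w w' hs hw hw', key2 v' v w' w (crx_sim_symm hs) hw' hw⟩
  have key2simβ : ∀ (w w' : W) (v v' : V), H.sim w w' → v ∈ β w → v' ∈ β w' →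
      G.sim v v' := fun w w' v v' hs hv hv' =>
    ⟨key2β w w' v v' hs hv hv', key2β w' w v' v (crx_sim_symm hs) hv' hv⟩
  have main1 : ∀ (v : V) (w : W), w ∈ α v →
      (⋃ v' ∈ G.simClass v, α v') = H.simClass w := by
    intro v w hw
    ext w₀
    simp only [Set.mem_iUnion, exists_prop, simClass, Set.mem_setOf_eq]
    constructor
    · rintro ⟨v₁, hv₁, hw₀⟩
      exact key2sim v v₁ w w₀ hv₁ hw hw₀
    · intro hsimw
      obtain ⟨x, hx⟩ := hβne w₀
      exact ⟨x, key2simβ w w₀ v x hsimw (hαβ v w hw) hx, hβα w₀ x hx⟩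
  have main2 : ∀ (w : W) (v : V), v ∈ β w →
      (⋃ w' ∈ H.simClass w, β w') = G.simClass v := by
    intro w v hv
    ext v₀
    simp only [Set.mem_iUnion, exists_prop, simClass, Set.mem_setOf_eq]
    constructor
    · rintro ⟨w₁, hw₁, hv₀⟩
      exact key2simβ w w₁ v v₀ hw₁ hv hv₀
    · intro hsimv
      obtain ⟨x, hx⟩ := hαne v₀
      exact ⟨x, key2sim v v₀ w x hsimv (hβα w v hv) hx, hαβ v₀ x hx⟩
  refine ⟨?_, ?_, ?_, ?_, ?_⟩
  · intro v
    obtain ⟨w, hw⟩ := hαne v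
    exact ⟨w, main1 v w hw⟩
  · intro w
    obtain ⟨v, hv⟩ := hβne w
    exact ⟨v, main2 w v hv⟩
  · intro v w hw
    simp only [Set.mem_iUnion, exists_prop, simClass, Set.mem_setOf_eq] at hw
    obtain ⟨v₁, hv₁, hwv₁⟩ := hw
    rw [main2 w v₁ (hαβ v₁ w hwv₁)]
    exact crx_simClass_eq hG (crx_sim_symm hv₁)
  · intro w v hv
    simp only [Set.mem_iUnion, exists_prop, simClass, Set.mem_setOf_eq] at hv
    obtain ⟨w₁, hw₁, hvw₁⟩ := hv
    rw [main1 v w₁ (hβα w₁ v hvw₁)]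
    exact crx_simClass_eq hH (crx_sim_symm hw₁)
  · intro v v' w w' _hns hw hw'
    simp only [Set.mem_iUnion, exists_prop, simClass, Set.mem_setOf_eq] at hw hw'
    obtain ⟨u, hu, hwu⟩ := hw
    obtain ⟨u', hu', hwu'⟩ := hw'
    constructor
    · intro hvv'
      have ha1 : G.Adj u v' := crx_adj_congr hG hu hvv'
      have ha2 : G.Adj u' u := crx_adj_congr hG hu' ha1.symm
      exact ((h1 u' u ha2.ne ha2) hwu) w' hwu'
    · intro hww'
      have hu'u : G.Adj u' u :=
        ((h2 w w' hww'.ne hww') (hαβ u' w' hwu')) u (hαβ u w hwu)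
      have ha1 : G.Adj v u' := crx_adj_congr hG (crx_sim_symm hu) hu'u.symm
      have ha2 : G.Adj v' v := crx_adj_congr hG (crx_sim_symm hu') ha1.symm
      exact ha2.symm
end

section
/- Let Ω be a finite simple graph which is transvection-free, contains no square, and has at least two vertices. Then for every vertex v ∈ Ω: (a) st(v) is a maximal join full subgraph of Ω; (b) the maximal clique factor of st(v) is {v}; (c) lk(v) is an irreducible graph. Moreover, every maximal join full subgraph of Ω is of the form st(v) for some vertex v. -/
section Aux
open SimpleGraph
variable {V : Type*}

lemma joinset_subset_vstar {G : SimpleGraph V} (hsq : ¬ G.HasSquare) {T : Set V}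
    (hT : G.IsJoinSet T) : ∃ w ∈ T, T ⊆ G.vstar w := by
  obtain ⟨T₁, T₂, ⟨a, ha⟩, ⟨b, hb⟩, hdisj, hun, hadj⟩ := hT
  by_cases h1 : ∀ x ∈ T₁, ∀ y ∈ T₁, x ≠ y → G.Adj x y
  · refine ⟨a, by rw [← hun]; exact Or.inl ha, ?_⟩
    intro u hu
    rw [← hun] at hu
    rcases hu with hu | hu
    · rcases eq_or_ne u a with rfl | hne
      · exact Set.mem_insert _ _
      · exact Set.mem_insert_of_mem _ (h1 a ha u hu hne.symm)
    · exact Set.mem_insert_of_mem _ (hadj a ha u hu)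
  · push_neg at h1
    obtain ⟨x, hx, y, hy, hxy, hnadj⟩ := h1
    have h2 : ∀ p ∈ T₂, ∀ q ∈ T₂, p ≠ q → G.Adj p q := by
      intro p hp q hq hpq
      by_contra hn
      exact hsq ⟨x, p, y, q, hxy, hpq, hadj x hx p hp, (hadj y hy p hp).symm,
        hadj y hy q hq, (hadj x hx q hq).symm, hnadj, hn⟩
    refine ⟨b, by rw [← hun]; exact Or.inr hb, ?_⟩
    intro u hu
    rw [← hun] at hu
    rcases hu with hu | hu
    · exact Set.mem_insert_of_mem _ (hadj u hu b hb).symm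
    · rcases eq_or_ne u b with rfl | hne
      · exact Set.mem_insert _ _
      · exact Set.mem_insert_of_mem _ (h2 b hb u hu hne.symm)

lemma vstar_joinset {G : SimpleGraph V} {v : V} (h : (G.neighborSet v).Nonempty) :
    G.IsJoinSet (G.vstar v) := by
  refine ⟨{v}, G.neighborSet v, ⟨v, rfl⟩, h, ?_, Set.singleton_union, ?_⟩
  · simp [Set.disjoint_singleton_left]
  · rintro a rfl b hb
    exact hb

end Aux

open SimpleGraph in
theorem stmt_4 {V : Type*} [Fintype V] (G : SimpleGraph V)
    (htf : G.TransvectionFree) (hsq : ¬ G.HasSquare) (hcard : 2 ≤ Fintype.card V) :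
    (∀ v : V,
        G.IsMaxJoinSet (G.vstar v) ∧
        G.cliqueFactorIn (G.vstar v) = {v} ∧
        G.IrreducibleSet (G.neighborSet v)) ∧
    (∀ S : Set V, G.IsMaxJoinSet S → ∃ v : V, S = G.vstar v) := by
  have hnb : ∀ v : V, (G.neighborSet v).Nonempty := by
    intro v
    rw [Set.nonempty_iff_ne_empty]
    intro h
    obtain ⟨v', hv'⟩ := Fintype.exists_ne_of_one_lt_card (by omega) v
    exact htf v v' hv'.symm (by rw [h]; exact Set.empty_subset _)
  have hstar : ∀ v : V, G.IsJoinSet (G.vstar v) := fun v => vstar_joinset (hnb v)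
  constructor
  · intro v
    refine ⟨⟨hstar v, ?_⟩, ?_, ?_⟩
    · intro T hTj hsub
      obtain ⟨w, hwT, hTw⟩ := joinset_subset_vstar hsq hTj
      have hvw : v = w := by
        by_contra hne
        exact htf v w hne (fun u hu => hTw (hsub (Set.mem_insert_of_mem _ hu)))
      subst hvw
      exact Set.Subset.antisymm hTw hsub
    · ext u
      simp only [cliqueFactorIn, Set.mem_setOf_eq, Set.mem_singleton_iff]
      constructor
      · rintro ⟨huS, hall⟩
        by_contra hne
        refine htf v u (Ne.symm hne) ?_
        intro w hw
        rcases eq_or_ne w u with rfl | hwu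
        · exact Set.mem_insert _ _
        · exact Set.mem_insert_of_mem _ (hall w (Set.mem_insert_of_mem _ hw) hwu)
      · rintro rfl
        refine ⟨Set.mem_insert _ _, fun w hw hwv => ?_⟩
        rcases hw with rfl | hw
        · exact absurd rfl hwv
        · exact hw
    · intro hJn
      obtain ⟨w, hwN, hNw⟩ := joinset_subset_vstar hsq hJn
      exact htf v w (G.ne_of_adj hwN) hNw
  · intro S hS
    obtain ⟨w, hwS, hSw⟩ := joinset_subset_vstar hsq hS.1
    exact ⟨w, (hS.2 _ (hstar w) hSw).symm⟩
end

section
/- Let Λ be a finite simple graph and Δ ⊆ Λ a maximal join full subgraph, written Δ = C ∘ Δ₁ ∘ ⋯ ∘ Δₙ where C is the maximal clique factor of Δ and each Δᵢ is irreducible with at least two vertices. If C ≠ ∅ and Δ ≠ C, then C is an untransvectable clique of Λ: there is no vertex w ∉ C with C^⊥ ⊆ st(w). -/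
open SimpleGraph in
theorem stmt_5 {V : Type*} [Fintype V] (G : SimpleGraph V) (S : Set V)
    (hmax : G.IsMaxJoinSet S)
    (n : ℕ) (D : Fin n → Set V)
    (hunion : G.cliqueFactorIn S ∪ ⋃ i, D i = S)
    (hdisjC : ∀ i, Disjoint (G.cliqueFactorIn S) (D i))
    (hdisj : ∀ i j, i ≠ j → Disjoint (D i) (D j))
    (hcrossC : ∀ i, ∀ a ∈ G.cliqueFactorIn S, ∀ b ∈ D i, G.Adj a b)
    (hcross : ∀ i j, i ≠ j → ∀ a ∈ D i, ∀ b ∈ D j, G.Adj a b)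
    (hirr : ∀ i, G.IrreducibleSet (D i))
    (hcard : ∀ i, 2 ≤ (D i).ncard)
    (hCne : (G.cliqueFactorIn S).Nonempty)
    (hSC : S ≠ G.cliqueFactorIn S) :
    ¬ ∃ w : V, w ∉ G.cliqueFactorIn S ∧ G.perp (G.cliqueFactorIn S) ⊆ G.vstar w := by
  classical
  set C := G.cliqueFactorIn S with hC
  have hCS : C ⊆ S := fun v hv => hv.1
  have hDS : ∀ i, D i ⊆ S := by
    intro i x hx
    rw [← hunion]; exact Or.inr (Set.mem_iUnion.mpr ⟨i, hx⟩)
  have hmemD : ∀ a ∈ S, a ∉ C → ∃ i, a ∈ D i := by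
    intro a ha hac
    rw [← hunion] at ha
    rcases ha with h | h
    · exact absurd h hac
    · exact Set.mem_iUnion.mp h
  have hperpS : ∀ a ∈ S, a ∉ C → a ∈ G.perp C := by
    intro a ha hac
    obtain ⟨i, hi⟩ := hmemD a ha hac
    exact ⟨hac, fun u hu => (hcrossC i u hu a hi).symm⟩
  rintro ⟨w, hwC, hperp⟩
  by_cases hwS : w ∈ S
  · -- w ∈ D i for some i; then D i is a join, contradiction
    obtain ⟨i, hi⟩ := hmemD w hwS hwC
    apply hirr i
    have hne : (D i \ {w}).Nonempty := by
      have h2 := hcard i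
      obtain ⟨a, b, ha, hb, hab⟩ := (Set.one_lt_ncard_iff (Set.toFinite _)).mp
        (lt_of_lt_of_le one_lt_two h2)
      by_cases haw : a = w
      · exact ⟨b, hb, by simp [← haw, Ne.symm hab]⟩
      · exact ⟨a, ha, by simp [haw]⟩
    refine ⟨{w}, D i \ {w}, ⟨w, rfl⟩, hne, ?_, ?_, ?_⟩
    · simp
    · rw [Set.singleton_union, Set.insert_diff_singleton, Set.insert_eq_self.mpr hi]
    · rintro a rfl b ⟨hb, hbw⟩
      have hb' : b ∈ G.perp C := hperpS b (hDS i hb)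
        (fun hbc => (Set.disjoint_left.mp (hdisjC i) hbc) hb)
      rcases Set.mem_insert_iff.mp (hperp hb') with h | h
      · exact absurd h hbw
      · exact (G.mem_neighborSet _ _).mp h
  · -- w ∉ S; then S ∪ {w} is a join, contradicting maximality
    have hSCne : (S \ C).Nonempty := by
      rcases Set.not_subset.mp (fun h => hSC (le_antisymm h hCS)) with ⟨a, ha, hac⟩
      exact ⟨a, ha, hac⟩
    have hT : G.IsJoinSet (S ∪ {w}) := by
      refine ⟨S \ C, C ∪ {w}, hSCne, ⟨w, Or.inr rfl⟩, ?_, ?_, ?_⟩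
      · rw [Set.disjoint_union_right]
        refine ⟨Set.disjoint_sdiff_left, ?_⟩
        simp only [Set.disjoint_singleton_right]
        exact fun h => hwS h.1
      · rw [← Set.union_assoc, Set.diff_union_of_subset hCS]
      · rintro a ⟨ha, hac⟩ b hb
        rcases hb with hb | hb
        · obtain ⟨i, hi⟩ := hmemD a ha hac
          exact (hcrossC i b hb a hi).symm
        · have ha' : a ∈ G.perp C := hperpS a ha hac
          rcases Set.mem_insert_iff.mp (hperp ha') with h | h
          · exact absurd (h ▸ ha) hwS
          · exact hb ▸ ((G.mem_neighborSet _ _).mp h).symm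
    have h1 := hmax.2 _ hT (Set.subset_union_left)
    have h2 : w ∈ S := h1 ▸ (Set.mem_union_right _ rfl)
    exact hwS h2
end

section
/- Let Λ be a finite simple graph and Δ = Δ₁ ∘ ⋯ ∘ Δₙ ⊆ Λ a maximal join full subgraph with empty maximal clique factor, where each Δᵢ is irreducible with at least two vertices. If D ⊆ Δ₁ is a complete subgraph that is untransvectable in Δ₁ (no vertex w of Δ₁ outside D satisfies D^⊥ ∩ Δ₁ ⊆ st_{Δ₁}(w)), then D is untransvectable in Λ: no vertex w of Λ outside D satisfies D^⊥ ⊆ st(w). -/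
open SimpleGraph in
theorem stmt_6 {V : Type*} [Fintype V] (G : SimpleGraph V) (S : Set V)
    (hmax : G.IsMaxJoinSet S) (hC : G.cliqueFactorIn S = ∅)
    (n : ℕ) (hn : 0 < n) (P : Fin n → Set V)
    (hunion : ⋃ i, P i = S)
    (hdisj : ∀ i j, i ≠ j → Disjoint (P i) (P j))
    (hcross : ∀ i j, i ≠ j → ∀ a ∈ P i, ∀ b ∈ P j, G.Adj a b)
    (hirr : ∀ i, G.IrreducibleSet (P i))
    (hcard : ∀ i, 2 ≤ (P i).ncard)
    (D : Set V) (hD : D ⊆ P ⟨0, hn⟩) (hcomplete : D.Pairwise G.Adj)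
    (hunt : ¬ ∃ w ∈ P ⟨0, hn⟩, w ∉ D ∧
        G.perpIn (P ⟨0, hn⟩) D ⊆ {x ∈ P ⟨0, hn⟩ | x = w ∨ G.Adj w x}) :
    ¬ ∃ w : V, w ∉ D ∧ G.perp D ⊆ G.vstar w := by
  rintro ⟨w, hwD, hws⟩
  have hst : ∀ a ∈ G.perp D, a ≠ w → G.Adj w a := by
    intro a ha hne
    have h := hws ha
    rw [vstar, Set.mem_insert_iff] at h
    rcases h with h | h
    · exact absurd h hne
    · exact h
  have hperp : ∀ (i : Fin n), i ≠ ⟨0, hn⟩ → ∀ a ∈ P i, a ∈ G.perp D := by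
    intro i hi a ha
    refine ⟨fun haD => Set.disjoint_left.mp (hdisj i ⟨0, hn⟩ hi) ha (hD haD), ?_⟩
    intro u hu
    exact hcross i ⟨0, hn⟩ hi a ha u (hD hu)
  by_cases hwS : w ∈ S
  · rw [← hunion, Set.mem_iUnion] at hwS
    obtain ⟨j, hwj⟩ := hwS
    by_cases hj : j = ⟨0, hn⟩
    · subst hj
      refine hunt ⟨w, hwj, hwD, fun x hx => ?_⟩
      obtain ⟨hxP, hxD, hxadj⟩ := hx
      refine ⟨hxP, ?_⟩
      by_cases hxw : x = w
      · exact Or.inl hxw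
      · exact Or.inr (hst x ⟨hxD, hxadj⟩ hxw)
    · apply hirr j
      obtain ⟨x, y, hxj, hyj, hxy⟩ := (Set.one_lt_ncard_iff (Set.toFinite (P j))).mp (by
        have := hcard j; omega)
      obtain ⟨z, hzj, hzw⟩ : ∃ z ∈ P j, z ≠ w := by
        by_cases hxw : x = w
        · exact ⟨y, hyj, by rintro rfl; exact hxy hxw⟩
        · exact ⟨x, hxj, hxw⟩
      refine ⟨{w}, P j \ {w}, ⟨w, rfl⟩, ⟨z, hzj, hzw⟩, ?_, ?_, ?_⟩
      · rw [Set.disjoint_left]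
        rintro a rfl hb
        exact hb.2 rfl
      · rw [Set.singleton_union, Set.insert_diff_singleton, Set.insert_eq_self.mpr hwj]
      · rintro a rfl b hb
        exact hst b (hperp j hj b hb.1) hb.2
  · obtain ⟨j, hj⟩ : ∃ j : Fin n, j ≠ ⟨0, hn⟩ := by
      by_contra h
      push_neg at h
      apply hirr ⟨0, hn⟩
      have hS : S = P ⟨0, hn⟩ := by
        rw [← hunion]
        apply Set.Subset.antisymm
        · exact Set.iUnion_subset fun i => by rw [h i]
        · exact Set.subset_iUnion P ⟨0, hn⟩
      rw [← hS]; exact hmax.1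
    have hP0S : P ⟨0, hn⟩ ⊆ S := hunion ▸ Set.subset_iUnion P ⟨0, hn⟩
    have hjoin : G.IsJoinSet (insert w S) := by
      obtain ⟨x, hxj⟩ : (P j).Nonempty := by
        apply Set.nonempty_of_ncard_ne_zero
        have := hcard j; omega
      refine ⟨S \ P ⟨0, hn⟩, insert w (P ⟨0, hn⟩),
        ⟨x, hunion ▸ Set.mem_iUnion.mpr ⟨j, hxj⟩,
          fun hx0 => Set.disjoint_left.mp (hdisj j ⟨0, hn⟩ hj) hxj hx0⟩,
        ⟨w, Set.mem_insert _ _⟩, ?_, ?_, ?_⟩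
      · rw [Set.disjoint_left]
        rintro a ⟨haS, ha0⟩ hmem
        rcases hmem with rfl | h
        · exact hwS haS
        · exact ha0 h
      · ext y
        simp only [Set.mem_union, Set.mem_diff, Set.mem_insert_iff]
        constructor
        · rintro (⟨h, _⟩ | rfl | h)
          · exact Or.inr h
          · exact Or.inl rfl
          · exact Or.inr (hP0S h)
        · rintro (rfl | h)
          · exact Or.inr (Or.inl rfl)
          · by_cases h0 : y ∈ P ⟨0, hn⟩
            · exact Or.inr (Or.inr h0)
            · exact Or.inl ⟨h, h0⟩
      · rintro a ⟨haS, ha0⟩ b hb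
        obtain ⟨i, hai⟩ := Set.mem_iUnion.mp (hunion ▸ haS : a ∈ ⋃ i, P i)
        have hi : i ≠ ⟨0, hn⟩ := fun h => ha0 (h ▸ hai)
        rcases hb with rfl | hb0
        · exact (hst a (hperp i hi a hai) (fun h => hwS (h ▸ haS))).symm
        · exact hcross i ⟨0, hn⟩ hi a hai b hb0
    have heq := hmax.2 _ hjoin (Set.subset_insert w S)
    exact hwS (heq ▸ Set.mem_insert w S)
end

section
/- Every finite simple graph Γ with empty maximal clique factor decomposes as a join Γ = Γ₁ ∘ ⋯ ∘ Γₙ of irreducible full subgraphs each having at least two vertices, and this decomposition is unique up to permutation of the factors. -/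
open SimpleGraph in
/-- A join decomposition of the whole graph into irreducible full subgraphs with at least
two vertices each. -/
def SimpleGraph.IsIrredJoinDecomp {V : Type*} (G : SimpleGraph V)
    (n : ℕ) (P : Fin n → Set V) : Prop :=
  (∀ i j, i ≠ j → Disjoint (P i) (P j)) ∧
  (⋃ i, P i) = Set.univ ∧
  (∀ i j, i ≠ j → ∀ a ∈ P i, ∀ b ∈ P j, G.Adj a b) ∧
  (∀ i, G.IrreducibleSet (P i)) ∧
  (∀ i, 2 ≤ (P i).ncard)

namespace JoinDecompAux
open SimpleGraph

variable {V : Type*}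

def DecompIdx (G : SimpleGraph V) (S : Set V) {ι : Type*} (P : ι → Set V) : Prop :=
  (∀ i j, i ≠ j → Disjoint (P i) (P j)) ∧
  (⋃ i, P i) = S ∧
  (∀ i j, i ≠ j → ∀ a ∈ P i, ∀ b ∈ P j, G.Adj a b) ∧
  (∀ i, G.IrreducibleSet (P i)) ∧
  (∀ i, 2 ≤ (P i).ncard)

lemma reindex {G : SimpleGraph V} {S : Set V} {ι κ : Type*} (e : κ ≃ ι) {P : ι → Set V}
    (h : DecompIdx G S P) : DecompIdx G S (P ∘ e) := by
  obtain ⟨h1, h2, h3, h4, h5⟩ := h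
  refine ⟨fun i j hij => h1 _ _ (fun he => hij (e.injective he)), ?_,
    fun i j hij => h3 _ _ (fun he => hij (e.injective he)),
    fun i => h4 _, fun i => h5 _⟩
  rw [← h2]
  exact congrArg _ rfl |>.trans (e.surjective.iSup_comp P)

lemma combine {G : SimpleGraph V} {S₁ S₂ : Set V} {ι₁ ι₂ : Type*}
    {P₁ : ι₁ → Set V} {P₂ : ι₂ → Set V}
    (h1 : DecompIdx G S₁ P₁) (h2 : DecompIdx G S₂ P₂)
    (hd : Disjoint S₁ S₂) (hadj : ∀ a ∈ S₁, ∀ b ∈ S₂, G.Adj a b) :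
    DecompIdx G (S₁ ∪ S₂) (Sum.elim P₁ P₂) := by
  have hsub1 : ∀ i, P₁ i ⊆ S₁ := fun i => h1.2.1 ▸ Set.subset_iUnion P₁ i
  have hsub2 : ∀ i, P₂ i ⊆ S₂ := fun i => h2.2.1 ▸ Set.subset_iUnion P₂ i
  refine ⟨?_, ?_, ?_, ?_, ?_⟩
  · rintro (a | a) (b | b) hij
    · exact h1.1 a b (fun h => hij (by rw [h]))
    · exact (hd.mono (hsub1 a) (hsub2 b))
    · exact (hd.symm.mono (hsub2 a) (hsub1 b))
    · exact h2.1 a b (fun h => hij (by rw [h]))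
  · rw [Set.iUnion_sum]; simp only [Sum.elim_inl, Sum.elim_inr, h1.2.1, h2.2.1]
  · rintro (a | a) (b | b) hij x hx y hy
    · exact h1.2.2.1 a b (fun h => hij (by rw [h])) x hx y hy
    · exact hadj x (hsub1 a hx) y (hsub2 b hy)
    · exact (hadj y (hsub1 b hy) x (hsub2 a hx)).symm
    · exact h2.2.2.1 a b (fun h => hij (by rw [h])) x hx y hy
  · rintro (a | a)
    · exact h1.2.2.2.1 a
    · exact h2.2.2.2.1 a
  · rintro (a | a)
    · exact h1.2.2.2.2 a
    · exact h2.2.2.2.2 a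

lemma empty_decomp (G : SimpleGraph V) : DecompIdx G (∅ : Set V) (fun _ : Fin 0 => ∅) := by
  refine ⟨fun i => i.elim0, by simp, fun i => i.elim0, fun i => i.elim0, fun i => i.elim0⟩

lemma cf_left {G : SimpleGraph V} {S₁ S₂ : Set V}
    (hadj : ∀ a ∈ S₁, ∀ b ∈ S₂, G.Adj a b)
    (hcf : G.cliqueFactorIn (S₁ ∪ S₂) = ∅) : G.cliqueFactorIn S₁ = ∅ := by
  ext v
  simp only [cliqueFactorIn, Set.mem_setOf_eq, Set.mem_empty_iff_false, iff_false, not_and]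
  rintro hv hall
  have hmem : v ∈ G.cliqueFactorIn (S₁ ∪ S₂) :=
    ⟨Or.inl hv, fun w hw hne => hw.elim (fun h => hall w h hne) (fun h => hadj v hv w h)⟩
  rw [hcf] at hmem
  exact hmem

lemma exists_decomp [Fintype V] (G : SimpleGraph V) :
    ∀ k (S : Set V), S.ncard ≤ k → G.cliqueFactorIn S = ∅ →
      ∃ (n : ℕ) (P : Fin n → Set V), DecompIdx G S P := by
  intro k
  induction k with
  | zero =>
    intro S hS _
    have hS0 : S = ∅ := by
      rw [← Set.ncard_eq_zero S.toFinite]; omega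
    exact ⟨0, fun _ => ∅, hS0 ▸ empty_decomp G⟩
  | succ k ih =>
    intro S hS hcf
    rcases Set.eq_empty_or_nonempty S with hS0 | hSne
    · exact ⟨0, fun _ => ∅, hS0 ▸ empty_decomp G⟩
    by_cases hirr : G.IrreducibleSet S
    · -- S is irreducible, nonempty; show ncard ≥ 2
      have h1 : 1 ≤ S.ncard := (Set.ncard_pos S.toFinite).mpr hSne
      have h2 : 2 ≤ S.ncard := by
        by_contra h
        have : S.ncard = 1 := by omega
        obtain ⟨v, hv⟩ := Set.ncard_eq_one.mp this
        have : v ∈ G.cliqueFactorIn S := by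
          refine ⟨by simp [hv], fun w hw hne => ?_⟩
          rw [hv] at hw
          exact absurd hw hne
        rw [hcf] at this
        exact this
      exact ⟨1, fun _ => S, fun i j hij => absurd (Subsingleton.elim i j) hij, Set.iUnion_const S,
        fun i j hij => absurd (Subsingleton.elim i j) hij, fun _ => hirr, fun _ => h2⟩
    · obtain ⟨S₁, S₂, h1n, h2n, hd, hu, hadj⟩ := not_not.mp hirr
      subst hu
      have hcard : (S₁ ∪ S₂).ncard = S₁.ncard + S₂.ncard :=
        Set.ncard_union_eq hd S₁.toFinite S₂.toFinite
      have hc1 : 1 ≤ S₁.ncard := (Set.ncard_pos S₁.toFinite).mpr h1n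
      have hc2 : 1 ≤ S₂.ncard := (Set.ncard_pos S₂.toFinite).mpr h2n
      have hcf1 : G.cliqueFactorIn S₁ = ∅ := cf_left hadj hcf
      have hcf2 : G.cliqueFactorIn S₂ = ∅ := by
        apply cf_left (fun a ha b hb => (hadj b hb a ha).symm)
        rwa [Set.union_comm]
      obtain ⟨n₁, P₁, hP₁⟩ := ih S₁ (by omega) hcf1
      obtain ⟨n₂, P₂, hP₂⟩ := ih S₂ (by omega) hcf2
      exact ⟨n₁ + n₂, Sum.elim P₁ P₂ ∘ finSumFinEquiv.symm,
        reindex finSumFinEquiv.symm (combine hP₁ hP₂ hd hadj)⟩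

lemma sub_lemma {G : SimpleGraph V} {n m : ℕ} {P : Fin n → Set V} {Q : Fin m → Set V}
    (hP : G.IsIrredJoinDecomp n P) (hQ : G.IsIrredJoinDecomp m Q) (i : Fin n) :
    ∃ j, P i ⊆ Q j := by
  have hne : (P i).Nonempty := Set.nonempty_of_ncard_ne_zero (by have := hP.2.2.2.2 i; omega)
  obtain ⟨v, hv⟩ := hne
  have hvU : v ∈ ⋃ j, Q j := by rw [hQ.2.1]; trivial
  obtain ⟨j, hj⟩ := Set.mem_iUnion.mp hvU
  refine ⟨j, fun b hb => ?_⟩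
  by_contra hbQ
  apply hP.2.2.2.1 i
  refine ⟨P i ∩ Q j, P i \ Q j, ⟨v, hv, hj⟩, ⟨b, hb, hbQ⟩, ?_, Set.inter_union_diff _ _, ?_⟩
  · exact Set.disjoint_left.mpr (fun x hx hx' => hx'.2 hx.2)
  · rintro a ⟨_, haQ⟩ b' ⟨hb'P, hb'Q⟩
    have hb'U : b' ∈ ⋃ j', Q j' := by rw [hQ.2.1]; trivial
    obtain ⟨j', hj'⟩ := Set.mem_iUnion.mp hb'U
    have hjj : j ≠ j' := fun h => hb'Q (h ▸ hj')
    exact hQ.2.2.1 j j' hjj a haQ b' hj'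

lemma uniq {G : SimpleGraph V} {n m : ℕ} {P : Fin n → Set V} {Q : Fin m → Set V}
    (hP : G.IsIrredJoinDecomp n P) (hQ : G.IsIrredJoinDecomp m Q) :
    ∃ σ : Fin n ≃ Fin m, ∀ i, Q (σ i) = P i := by
  choose f hf using sub_lemma hP hQ
  choose g hg using sub_lemma hQ hP
  have hPne : ∀ i, (P i).Nonempty := fun i =>
    Set.nonempty_of_ncard_ne_zero (by have := hP.2.2.2.2 i; omega)
  have hQne : ∀ j, (Q j).Nonempty := fun j =>
    Set.nonempty_of_ncard_ne_zero (by have := hQ.2.2.2.2 j; omega)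
  have hgf : ∀ i, g (f i) = i := by
    intro i
    by_contra h
    obtain ⟨v, hv⟩ := hPne i
    exact Set.disjoint_left.mp (hP.1 _ _ h) (hg (f i) (hf i hv)) hv
  have hfg : ∀ j, f (g j) = j := by
    intro j
    by_contra h
    obtain ⟨v, hv⟩ := hQne j
    exact Set.disjoint_left.mp (hQ.1 _ _ h) (hf (g j) (hg j hv)) hv
  refine ⟨⟨f, g, hgf, hfg⟩, fun i => ?_⟩
  exact Set.Subset.antisymm (fun x hx => (hgf i) ▸ hg (f i) hx) (hf i)

end JoinDecompAux

open SimpleGraph in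
theorem stmt_10 {V : Type*} [Fintype V] (G : SimpleGraph V)
    (hmcf : G.cliqueFactorIn Set.univ = ∅) :
    (∃ (n : ℕ) (P : Fin n → Set V), G.IsIrredJoinDecomp n P) ∧
    (∀ (n : ℕ) (P : Fin n → Set V) (m : ℕ) (Q : Fin m → Set V),
        G.IsIrredJoinDecomp n P → G.IsIrredJoinDecomp m Q →
        ∃ σ : Fin n ≃ Fin m, ∀ i, Q (σ i) = P i) := by
  constructor
  · obtain ⟨n, P, h⟩ := JoinDecompAux.exists_decomp G (Set.univ : Set V).ncard Set.univ le_rfl hmcf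
    exact ⟨n, P, h⟩
  · exact fun n P m Q hP hQ => JoinDecompAux.uniq hP hQ
end

section
/- Let Γ be a finite simple graph and define v ≤ v' for vertices if lk(v) ⊆ st(v'), and v ∼ v' if v ≤ v' and v' ≤ v. Then ≤ is reflexive and transitive (a preorder), and each ∼-equivalence class [v] spans a full subgraph of Γ that is either complete or edgeless. -/
open SimpleGraph in
lemma dle_refl' {V : Type*} (G : SimpleGraph V) : Reflexive G.dle := by
  intro v w hw
  exact Set.mem_insert_of_mem _ hw

open SimpleGraph in
lemma dle_trans' {V : Type*} (G : SimpleGraph V) : Transitive G.dle := by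
  intro a b c hab hbc w hw
  rcases hab hw with h | h
  · -- w = b
    subst h
    -- v := a is adjacent to w = b, so a ∈ lk(b) ⊆ st(c)
    have hav : G.Adj a w := hw
    have ha : a ∈ G.vstar c := hbc hav.symm
    rcases ha with h1 | h1
    · subst h1; exact Set.mem_insert_of_mem _ hav
    · -- a adj c, so c ∈ lk(a) ⊆ st(b) = st(w)
      have hc : c ∈ G.vstar w := hab (G.adj_symm h1 : G.Adj a c)
      rcases hc with h2 | h2
      · exact h2 ▸ Set.mem_insert _ _
      · exact Set.mem_insert_of_mem _ (G.adj_symm h2)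
  · exact hbc h

open SimpleGraph in
theorem stmt_11 {V : Type*} [Fintype V] (G : SimpleGraph V) :
    Reflexive G.dle ∧ Transitive G.dle ∧
    (∀ v : V, (G.simClass v).Pairwise G.Adj ∨
      ∀ a ∈ G.simClass v, ∀ b ∈ G.simClass v, ¬ G.Adj a b) := by
  refine ⟨dle_refl' G, dle_trans' G, ?_⟩
  intro v
  by_cases hE : ∃ a ∈ G.simClass v, ∃ b ∈ G.simClass v, G.Adj a b
  · left
    obtain ⟨a, ha, b, hb, hab⟩ := hE
    -- key: any two distinct members are adjacent
    intro c hc d hd hcd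
    -- dle between any two members
    have dle_mem : ∀ x ∈ G.simClass v, ∀ y ∈ G.simClass v, G.dle x y := by
      intro x hx y hy
      exact dle_trans' G hx.2 hy.1
    -- find e in class adjacent to c
    have key : ∀ e ∈ G.simClass v, G.Adj e c → G.Adj c d := by
      intro e he hec
      have : c ∈ G.vstar d := dle_mem e he d hd hec
      rcases this with h | h
      · exact absurd h hcd
      · exact G.adj_symm h
    by_cases hca : c = a
    · exact key b hb (hca ▸ G.adj_symm hab)
    by_cases hcb : c = b
    · exact key a ha (hcb ▸ hab)
    · have : b ∈ G.vstar c := dle_mem a ha c hc hab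
      rcases this with h | h
      · exact absurd h.symm hcb
      · exact key b hb (G.adj_symm h)
  · right
    push_neg at hE
    exact fun a ha b hb => hE a ha b hb
end

section
/- Let Γ be a finite simple graph of girth at least 5, let v₀,…,v_{n−1},v_n=v₀ be a cycle of minimal length in a connected component of Γ (so n ≥ 5, each vertex having degree at least 2 and Γ having no leaves in that component), and let W_Γ be the associated right-angled Coxeter group. Then W_{lk(v₀)} ∩ (W_{lk(v₁)} · W_{lk(v₂)} ⋯ W_{lk(v_{n−1})}) ⊆ W_{v₁} · W_{v_{n−1}}, where the middle term is the set of products g₁g₂⋯g_{n−1} with gᵢ ∈ W_{lk(vᵢ)}. -/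
namespace SimpleGraph

variable {V : Type*}

/-- The defining relations of the right-angled Coxeter group of a graph: each generator is
an involution, and generators corresponding to adjacent vertices commute. -/
def racgRels (G : SimpleGraph V) : Set (FreeGroup V) :=
  {r | (∃ v : V, r = FreeGroup.of v * FreeGroup.of v) ∨
       (∃ v w : V, G.Adj v w ∧
         r = FreeGroup.of v * FreeGroup.of w * (FreeGroup.of v)⁻¹ * (FreeGroup.of w)⁻¹)}

/-- The right-angled Coxeter group of a finite simple graph. -/
abbrev RACG (G : SimpleGraph V) : Type _ := PresentedGroup G.racgRels

/-- The image of a vertex in the right-angled Coxeter group. -/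
def racgGen (G : SimpleGraph V) (v : V) : G.RACG := PresentedGroup.of v

/-- The standard parabolic subgroup of the right-angled Coxeter group generated by the
vertices of a full subgraph. -/
def racgParabolic (G : SimpleGraph V) (A : Set V) : Subgroup G.RACG :=
  Subgroup.closure (G.racgGen '' A)

section Aux

variable (G : SimpleGraph V)

lemma racg_rel_one {r : FreeGroup V} (hr : r ∈ G.racgRels) :
    (PresentedGroup.mk G.racgRels r : G.RACG) = 1 := by
  have : r ∈ Subgroup.normalClosure G.racgRels := Subgroup.subset_normalClosure hr
  exact (QuotientGroup.eq_one_iff r).mpr this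

lemma racgGen_sq (u : V) : G.racgGen u * G.racgGen u = 1 := by
  have := racg_rel_one G (r := FreeGroup.of u * FreeGroup.of u) (Or.inl ⟨u, rfl⟩)
  simpa [racgGen, PresentedGroup.of] using this

lemma racgGen_comm {u w : V} (h : G.Adj u w) :
    G.racgGen u * G.racgGen w * (G.racgGen u)⁻¹ * (G.racgGen w)⁻¹ = 1 := by
  have := racg_rel_one G
    (r := FreeGroup.of u * FreeGroup.of w * (FreeGroup.of u)⁻¹ * (FreeGroup.of w)⁻¹)
    (Or.inr ⟨u, w, h, rfl⟩)
  simpa [racgGen, PresentedGroup.of] using this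

lemma racgParabolic_mono {A B : Set V} (hAB : A ⊆ B) :
    G.racgParabolic A ≤ G.racgParabolic B :=
  Subgroup.closure_mono (Set.image_mono hAB)

lemma racgParabolic_empty {x : G.RACG} (hx : x ∈ G.racgParabolic (∅ : Set V)) : x = 1 := by
  rw [racgParabolic, Set.image_empty, Subgroup.closure_empty, Subgroup.mem_bot] at hx
  exact hx

variable [DecidableRel G.Adj] (v0 : V)

noncomputable def racgRetr : G.RACG →* G.RACG :=
  PresentedGroup.toGroup (f := fun w => if G.Adj v0 w then G.racgGen w else 1) (by
    rintro r (⟨u, rfl⟩ | ⟨u, w, huw, rfl⟩)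
    · simp only [map_mul, FreeGroup.lift_apply_of]
      by_cases hu : G.Adj v0 u <;> simp [hu, racgGen_sq]
    · simp only [map_mul, map_inv, FreeGroup.lift_apply_of]
      by_cases hu : G.Adj v0 u <;> by_cases hw : G.Adj v0 w <;>
        simp [hu, hw, racgGen_comm G huw])

lemma racgRetr_gen (w : V) :
    G.racgRetr v0 (G.racgGen w) = if G.Adj v0 w then G.racgGen w else 1 :=
  PresentedGroup.toGroup.of _

lemma racgRetr_fix {x : G.RACG} (hx : x ∈ G.racgParabolic (G.neighborSet v0)) :
    G.racgRetr v0 x = x := by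
  induction hx using Subgroup.closure_induction with
  | mem x hx =>
      obtain ⟨w, hw, rfl⟩ := hx
      rw [racgRetr_gen]; exact if_pos hw
  | one => exact map_one _
  | mul x y _ _ hx hy => rw [map_mul, hx, hy]
  | inv x _ hx => rw [map_inv, hx]

lemma racgRetr_mem {A : Set V} {x : G.RACG} (hx : x ∈ G.racgParabolic A) :
    G.racgRetr v0 x ∈ G.racgParabolic (A ∩ G.neighborSet v0) := by
  induction hx using Subgroup.closure_induction with
  | mem x hx =>
      obtain ⟨w, hw, rfl⟩ := hx
      rw [racgRetr_gen]
      split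
      · exact Subgroup.subset_closure ⟨w, ⟨hw, by assumption⟩, rfl⟩
      · exact one_mem _
  | one => rw [map_one]; exact one_mem _
  | mul x y _ _ hx hy => rw [map_mul]; exact mul_mem hx hy
  | inv x _ hx => rw [map_inv]; exact inv_mem hx

lemma girth_le_length_five (hgirth : 5 ≤ G.girth) {a : V} (w : G.Walk a a) (hw : w.IsCycle) :
    5 ≤ w.length := by
  have h1 : G.egirth ≤ w.length := by
    simp only [egirth]
    exact iInf_le_of_le a (iInf_le_of_le w (iInf_le_of_le hw le_rfl))
  have : G.girth ≤ w.length := by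
    have := ENat.toNat_le_toNat h1 (by simp)
    simpa [girth] using this
  omega

lemma no_triangle (hgirth : 5 ≤ G.girth) {a b c : V}
    (hab : G.Adj a b) (hbc : G.Adj b c) (hca : G.Adj c a) : False := by
  have h1 : a ≠ b := hab.ne
  have h2 : b ≠ c := hbc.ne
  have h3 : c ≠ a := hca.ne
  have hc : ((Walk.cons hab (Walk.cons hbc (Walk.cons hca Walk.nil))) : G.Walk a a).IsCycle := by
    simp_all [Walk.isCycle_def, Walk.isTrail_def, Sym2.eq, Sym2.rel_iff]
    aesop
  have := girth_le_length_five G hgirth _ hc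
  simp [Walk.length_cons] at this

lemma no_square (hgirth : 5 ≤ G.girth) {a b c d : V}
    (hab : G.Adj a b) (hbc : G.Adj b c) (hcd : G.Adj c d) (hda : G.Adj d a)
    (hac : a ≠ c) (hbd : b ≠ d) : False := by
  have h1 : a ≠ b := hab.ne
  have h2 : b ≠ c := hbc.ne
  have h3 : c ≠ d := hcd.ne
  have h4 : d ≠ a := hda.ne
  have hc : ((Walk.cons hab (Walk.cons hbc (Walk.cons hcd (Walk.cons hda Walk.nil)))) :
      G.Walk a a).IsCycle := by
    simp_all [Walk.isCycle_def, Walk.isTrail_def, Sym2.eq, Sym2.rel_iff]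
    aesop
  have := girth_le_length_five G hgirth _ hc
  simp [Walk.length_cons] at this

end Aux

end SimpleGraph

open SimpleGraph in
theorem stmt_16 {V : Type*} [Fintype V] (G : SimpleGraph V) [DecidableRel G.Adj]
    (hdeg : ∀ u : V, 2 ≤ G.degree u) (hgirth : 5 ≤ G.girth)
    (n : ℕ) (v : ℕ → V) (hn : 3 ≤ n)
    (hadj : ∀ i < n, G.Adj (v i) (v ((i + 1) % n)))
    (hinj : ∀ i < n, ∀ j < n, v i = v j → i = j)
    (hmin : ∀ (m : ℕ) (w : ℕ → V), 3 ≤ m →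
        (∀ i < m, G.Adj (w i) (w ((i + 1) % m))) →
        (∀ i < m, ∀ j < m, w i = w j → i = j) →
        G.Reachable (w 0) (v 0) → n ≤ m)
    (g : G.RACG) (hg : g ∈ G.racgParabolic (G.neighborSet (v 0)))
    (h : ℕ → G.RACG)
    (hh : ∀ i, 1 ≤ i → i ≤ n - 1 → h i ∈ G.racgParabolic (G.neighborSet (v i)))
    (hprod : g = ((List.range' 1 (n - 1)).map h).prod) :
    ∃ x ∈ G.racgParabolic {v 1}, ∃ y ∈ G.racgParabolic {v (n - 1)}, g = x * y := by
  -- basic adjacency facts along the cycle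
  have hadj' : ∀ i, i + 1 < n → G.Adj (v i) (v (i + 1)) := by
    intro i hi
    have := hadj i (by omega)
    rwa [Nat.mod_eq_of_lt hi] at this
  have hlast : G.Adj (v (n - 1)) (v 0) := by
    have := hadj (n - 1) (by omega)
    have e : (n - 1 + 1) % n = 0 := by
      have : n - 1 + 1 = n := by omega
      simp [this]
    rwa [e] at this
  -- n ≥ 5
  have hn5 : 5 ≤ n := by
    by_contra hc
    interval_cases n
    · exact no_triangle G hgirth (hadj' 0 (by omega)) (hadj' 1 (by omega)) hlast
    · refine no_square G hgirth (hadj' 0 (by omega)) (hadj' 1 (by omega)) (hadj' 2 (by omega))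
        hlast ?_ ?_
      · intro e; exact absurd (hinj 0 (by omega) 2 (by omega) e) (by omega)
      · intro e; exact absurd (hinj 1 (by omega) 3 (by omega) e) (by omega)
  -- reachability along the cycle
  have hreach : ∀ i, i < n → G.Reachable (v 0) (v i) := by
    intro i
    induction i with
    | zero => exact fun _ => Reachable.refl _
    | succ k ih =>
        intro hk
        exact (ih (by omega)).trans (hadj' k hk).reachable
  -- the key combinatorial lemma about common neighbours
  have key : ∀ i, 1 ≤ i → i ≤ n - 1 → ∀ w, G.Adj (v 0) w → G.Adj (v i) w →
      (i = 2 ∧ w = v 1) ∨ (i = n - 2 ∧ w = v (n - 1)) := by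
    intro i hi1 hi2 w hw0 hwi
    rcases eq_or_ne i 1 with rfl | hne1
    · exact absurd (no_triangle G hgirth hw0 hwi.symm (hadj' 0 (by omega)).symm) id
    rcases eq_or_ne i (n - 1) with rfl | hnen1
    · exact absurd (no_triangle G hgirth hw0 hwi.symm hlast) id
    rcases eq_or_ne i 2 with rfl | hne2
    · left
      refine ⟨rfl, ?_⟩
      by_contra hwv1
      refine no_square G hgirth hw0 hwi.symm (hadj' 1 (by omega)).symm
        (hadj' 0 (by omega)).symm ?_ hwv1
      intro e; exact absurd (hinj 0 (by omega) 2 (by omega) e) (by omega)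
    rcases eq_or_ne i (n - 2) with rfl | hnen2
    · right
      refine ⟨rfl, ?_⟩
      by_contra hwvn1
      refine no_square G hgirth hw0 hwi.symm ?_ hlast ?_ hwvn1
      · have := hadj' (n - 2) (by omega)
        rwa [show n - 2 + 1 = n - 1 by omega] at this
      · intro e; exact absurd (hinj 0 (by omega) (n - 2) (by omega) e) (by omega)
    -- now 3 ≤ i ≤ n - 3 : derive a contradiction using minimality
    exfalso
    have hi3 : 3 ≤ i := by omega
    have hin3 : i ≤ n - 3 := by omega
    by_cases hw : ∃ j, j < n ∧ w = v j
    · obtain ⟨j, hj, rfl⟩ := hw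
      rcases eq_or_ne j 1 with rfl | hj1
      · -- chord from v i to v 1 : cycle v 1 ... v i of length i
        have hA : ∀ k < i, G.Adj (v (k + 1)) (v ((k + 1) % i + 1)) := by
          intro k hk
          rcases eq_or_ne k (i - 1) with rfl | hk'
          · rw [show i - 1 + 1 = i by omega, Nat.mod_self, show (0 : ℕ) + 1 = 1 by omega]
            exact hwi
          · rw [Nat.mod_eq_of_lt (by omega : k + 1 < i)]
            exact hadj' (k + 1) (by omega)
        have hI : ∀ k < i, ∀ l < i, v (k + 1) = v (l + 1) → k = l := by
          intro k hk l hl e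
          have := hinj (k + 1) (by omega) (l + 1) (by omega) e
          omega
        have := hmin i (fun k => v (k + 1)) hi3 hA hI ((hadj' 0 (by omega)).reachable).symm
        omega
      rcases eq_or_ne j (n - 1) with rfl | hjn1
      · -- chord from v i to v (n-1) : cycle v i ... v (n-1) of length n - i
        have hA : ∀ k < n - i, G.Adj (v (k + i)) (v ((k + 1) % (n - i) + i)) := by
          intro k hk
          rcases eq_or_ne k (n - i - 1) with rfl | hk'
          · rw [show n - i - 1 + 1 = n - i by omega, Nat.mod_self,
              show (0 : ℕ) + i = i by omega, show n - i - 1 + i = n - 1 by omega]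
            exact hwi.symm
          · rw [Nat.mod_eq_of_lt (by omega : k + 1 < n - i), show k + 1 + i = k + i + 1 by omega]
            exact hadj' (k + i) (by omega)
        have hI : ∀ k < n - i, ∀ l < n - i, v (k + i) = v (l + i) → k = l := by
          intro k hk l hl e
          have := hinj (k + i) (by omega) (l + i) (by omega) e
          omega
        have hR : G.Reachable (v (0 + i)) (v 0) := by
          rw [Nat.zero_add]; exact (hreach i (by omega)).symm
        have := hmin (n - i) (fun k => v (k + i)) (by omega) hA hI hR
        omega
      · -- chord from v 0 to v j with 2 ≤ j ≤ n - 2 : cycle v 0 ... v j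
        have hj0 : j ≠ 0 := by
          intro e; subst e; exact hw0.ne rfl
        have hA : ∀ k < j + 1, G.Adj (v k) (v ((k + 1) % (j + 1))) := by
          intro k hk
          rcases eq_or_ne k j with rfl | hk'
          · rw [Nat.mod_self]
            exact hw0.symm
          · rw [Nat.mod_eq_of_lt (by omega : k + 1 < j + 1)]
            exact hadj' k (by omega)
        have hI : ∀ k < j + 1, ∀ l < j + 1, v k = v l → k = l := by
          intro k hk l hl e
          exact hinj k (by omega) l (by omega) e
        have := hmin (j + 1) v (by omega) hA hI (Reachable.refl _)
        omega
    · -- w is a fresh vertex : cycle v 0 ... v i w of length i + 2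
      push_neg at hw
      set c : ℕ → V := fun k => if k ≤ i then v k else w with hc
      have hA : ∀ k < i + 2, G.Adj (c k) (c ((k + 1) % (i + 2))) := by
        intro k hk
        rcases lt_trichotomy k i with hk' | rfl | hk'
        · rw [Nat.mod_eq_of_lt (by omega : k + 1 < i + 2)]
          simp only [hc, if_pos (by omega : k ≤ i), if_pos (by omega : k + 1 ≤ i)]
          exact hadj' k (by omega)
        · rw [Nat.mod_eq_of_lt (by omega : k + 1 < k + 2)]
          simp only [hc, if_pos (le_refl k), if_neg (by omega : ¬ k + 1 ≤ k)]
          exact hwi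
        · have hk2 : k = i + 1 := by omega
          subst hk2
          rw [show (i + 1 + 1) % (i + 2) = 0 from by rw [show i + 1 + 1 = i + 2 by omega, Nat.mod_self]]
          simp only [hc, if_neg (by omega : ¬ i + 1 ≤ i), if_pos (by omega : 0 ≤ i)]
          exact hw0.symm
      have hI : ∀ k < i + 2, ∀ l < i + 2, c k = c l → k = l := by
        intro k hk l hl e
        by_cases hki : k ≤ i <;> by_cases hli : l ≤ i
        · simp only [hc, if_pos hki, if_pos hli] at e
          exact hinj k (by omega) l (by omega) e
        · simp only [hc, if_pos hki, if_neg hli] at e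
          exact absurd e.symm (hw k (by omega))
        · simp only [hc, if_neg hki, if_pos hli] at e
          exact absurd e (hw l (by omega))
        · omega
      have hR : G.Reachable (c 0) (v 0) := by
        simp only [hc, if_pos (by omega : 0 ≤ i)]
        exact Reachable.refl _
      have := hmin (i + 2) c (by omega) hA hI hR
      omega
  -- set up the retraction
  set ρ := G.racgRetr (v 0) with hρdef
  have hρg : ρ g = g := G.racgRetr_fix (v 0) hg
  have hρmem : ∀ i, 1 ≤ i → i ≤ n - 1 →
      ρ (h i) ∈ G.racgParabolic (G.neighborSet (v i) ∩ G.neighborSet (v 0)) :=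
    fun i h1 h2 => G.racgRetr_mem (v 0) (hh i h1 h2)
  have hρ1 : ∀ i, 1 ≤ i → i ≤ n - 1 → i ≠ 2 → i ≠ n - 2 → ρ (h i) = 1 := by
    intro i h1 h2 h3 h4
    have hset : G.neighborSet (v i) ∩ G.neighborSet (v 0) = ∅ := by
      ext w
      simp only [Set.mem_inter_iff, Set.mem_empty_iff_false, iff_false, not_and,
        mem_neighborSet]
      intro hwi hw0
      rcases key i h1 h2 w hw0 hwi with ⟨e, _⟩ | ⟨e, _⟩
      · exact h3 e
      · exact h4 e
    have := hρmem i h1 h2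
    rw [hset] at this
    exact G.racgParabolic_empty this
  have hρ2 : ρ (h 2) ∈ G.racgParabolic {v 1} := by
    refine G.racgParabolic_mono ?_ (hρmem 2 (by omega) (by omega))
    rintro w ⟨hwi, hw0⟩
    rcases key 2 (by omega) (by omega) w hw0 hwi with ⟨_, e⟩ | ⟨e, _⟩
    · exact e
    · omega
  have hρn2 : ρ (h (n - 2)) ∈ G.racgParabolic {v (n - 1)} := by
    refine G.racgParabolic_mono ?_ (hρmem (n - 2) (by omega) (by omega))
    rintro w ⟨hwi, hw0⟩
    rcases key (n - 2) (by omega) (by omega) w hw0 hwi with ⟨e, _⟩ | ⟨_, e⟩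
    · omega
    · exact e
  -- split the product
  have hsplit : List.range' 1 (n - 1) =
      [1, 2] ++ (List.range' 3 (n - 5) ++ [n - 2, n - 1]) := by
    have e0 : List.range' 1 2 = [1, 2] := rfl
    have e3 : List.range' (n - 2) 2 = [n - 2, n - 1] := by
      simp [List.range', show n - 2 + 1 = n - 1 from by omega]
    have e2 : List.range' 3 (n - 5) ++ List.range' (n - 2) 2 = List.range' 3 (n - 3) := by
      have := List.range'_append_1 (s := 3) (m := n - 5) (n := 2)
      rw [show (3 : ℕ) + (n - 5) = n - 2 by omega, show n - 5 + 2 = n - 3 by omega] at this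
      exact this
    have e1 : List.range' 1 2 ++ List.range' 3 (n - 3) = List.range' 1 (n - 1) := by
      have := List.range'_append_1 (s := 1) (m := 2) (n := n - 3)
      rw [show (1 : ℕ) + 2 = 3 by omega, show 2 + (n - 3) = n - 1 by omega] at this
      exact this
    rw [← e0, ← e3, ← e1, ← e2]
  have hgprod : g = ρ (h 1) * ρ (h 2) *
      ((List.range' 3 (n - 5)).map (fun i => ρ (h i))).prod * (ρ (h (n - 2)) * ρ (h (n - 1))) := by
    conv_lhs => rw [← hρg, hprod]
    rw [map_list_prod, List.map_map, hsplit]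
    simp [List.prod_append, mul_assoc, Function.comp_def]
  have hmid : ((List.range' 3 (n - 5)).map (fun i => ρ (h i))).prod = 1 := by
    apply List.prod_eq_one
    intro x hx
    rw [List.mem_map] at hx
    obtain ⟨i, hi, rfl⟩ := hx
    rw [List.mem_range'_1] at hi
    exact hρ1 i (by omega) (by omega) (by omega) (by omega)
  have h1one : ρ (h 1) = 1 := hρ1 1 (by omega) (by omega) (by omega) (by omega)
  have hn1one : ρ (h (n - 1)) = 1 := hρ1 (n - 1) (by omega) (by omega) (by omega) (by omega)
  refine ⟨ρ (h 2), hρ2, ρ (h (n - 2)), hρn2, ?_⟩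
  rw [hgprod, h1one, hmid, hn1one, one_mul, mul_one, mul_one]
end

section
/- Let Γ be a finite simple graph which is transvection-free and contains no square, and suppose Σ ⊆ Γ is a maximal join full subgraph. Write Σ = C ∘ Σ₁ ∘ ⋯ ∘ Σₙ with C its maximal clique factor and each Σᵢ irreducible with at least two vertices. Then n ≤ 1; consequently, if Σ is a join of two nonempty subgraphs then C ≠ ∅. -/
open SimpleGraph in
theorem stmt_18 {V : Type*} [Fintype V] (G : SimpleGraph V)
    (htf : G.TransvectionFree) (hsq : ¬ G.HasSquare)
    (S : Set V) (hmax : G.IsMaxJoinSet S)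
    (n : ℕ) (D : Fin n → Set V)
    (hunion : G.cliqueFactorIn S ∪ ⋃ i, D i = S)
    (hdisjC : ∀ i, Disjoint (G.cliqueFactorIn S) (D i))
    (hdisj : ∀ i j, i ≠ j → Disjoint (D i) (D j))
    (hcrossC : ∀ i, ∀ a ∈ G.cliqueFactorIn S, ∀ b ∈ D i, G.Adj a b)
    (hcross : ∀ i j, i ≠ j → ∀ a ∈ D i, ∀ b ∈ D j, G.Adj a b)
    (hirr : ∀ i, G.IrreducibleSet (D i))
    (hcard : ∀ i, 2 ≤ (D i).ncard) :
    n ≤ 1 ∧ (G.cliqueFactorIn S).Nonempty := by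
  have hnc : ∀ i, ∃ a ∈ D i, ∃ b ∈ D i, a ≠ b ∧ ¬ G.Adj a b := by
    intro i
    by_contra h
    push_neg at h
    apply hirr i
    have h2 : 1 < (D i).ncard := hcard i
    rw [Set.one_lt_ncard_iff (D i).toFinite] at h2
    obtain ⟨x, y, hx, hy, hxy⟩ := h2
    refine ⟨{x}, D i \ {x}, ⟨x, rfl⟩, ⟨y, hy, hxy.symm⟩, Set.disjoint_sdiff_right, ?_, ?_⟩
    · rw [Set.union_diff_cancel (by simpa using hx)]
    · rintro a rfl b hb
      exact (h b hb.1 a hx (by simpa using hb.2)).symm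
  have hn1 : n ≤ 1 := by
    by_contra hn
    push_neg at hn
    obtain ⟨a, ha, b, hb, hab, hnab⟩ := hnc ⟨0, by omega⟩
    obtain ⟨c, hc, d, hd, hcd, hncd⟩ := hnc ⟨1, by omega⟩
    have hij : (⟨0, by omega⟩ : Fin n) ≠ ⟨1, by omega⟩ := by simp [Fin.ext_iff]
    exact hsq ⟨a, c, b, d, hab, hcd, hcross _ _ hij a ha c hc,
      (hcross _ _ hij b hb c hc).symm, hcross _ _ hij b hb d hd,
      (hcross _ _ hij a ha d hd).symm, hnab, hncd⟩
  refine ⟨hn1, ?_⟩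
  by_contra hC
  rw [Set.not_nonempty_iff_eq_empty] at hC
  interval_cases n
  · obtain ⟨S₁, S₂, ⟨x, hx⟩, _, _, hu, _⟩ := hmax.1
    have hxS : x ∈ S := hu ▸ Set.mem_union_left _ hx
    rw [← hunion, hC] at hxS
    simp at hxS
  · have : S = D 0 := by
      rw [← hunion, hC, Set.empty_union]
      exact Set.iUnion_eq_const fun i => congrArg D (Subsingleton.elim i 0)
    exact hirr 0 (this ▸ hmax.1)
end
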